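/- If d ≤ n - ⌈k/r⌉ - k + 2 with (r+1) dividing n, then the minimum source–data-collector cut in the information flow graph G(k, n-k, r, d) is at least M, where data collectors connect to any n-d+1 of the n coded block nodes, groups of r+1 blocks are bottlenecked by an edge of capacity r·M/k, and each block node has internal edge capacity M/k. -/
import Mathlib


/-- If `d ≤ n - ⌈k/r⌉ - k + 2` with `(r+1) ∣ n`, then the minimum
source–data-collector cut in the information flow graph `G(k, n-k, r, d)` is at
least `M`.  A data collector connects to a set `A` of `n - d + 1` block nodes.
A (finite-capacity) cut is described by the set `B` of severed group bottleneck
edges (capacity `r·M/k` each) and the set `C` of severed block edges (capacity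
`M/k` each); it must sever every source-to-collector path, i.e. for every
`i ∈ A` either its group's bottleneck edge or its own block edge is cut. -/
theorem stmt_4 (n k r d : ℕ) (M : ℝ) (hM : 0 < M) (hk : 0 < k) (hr : 0 < r)
    (hd1 : 1 ≤ d) (hdn : d ≤ n) (hdvd : (r + 1) ∣ n)
    (grp : Fin n → Fin (n / (r + 1)))
    (hgrp : ∀ j, (Finset.univ.filter fun i => grp i = j).card = r + 1)
    (hd : (d : ℤ) ≤ (n : ℤ) - ⌈(k : ℚ) / (r : ℚ)⌉ - (k : ℤ) + 2)
    (A : Finset (Fin n)) (hA : A.card = n - d + 1)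
    (B : Finset (Fin (n / (r + 1)))) (C : Finset (Fin n))
    (hcut : ∀ i ∈ A, grp i ∈ B ∨ i ∈ C) :
    M ≤ (B.card : ℝ) * ((r : ℝ) * (M / k)) + (C.card : ℝ) * (M / k) := by
  have hk0 : (0:ℝ) < k := by exact_mod_cast hk
  have key : (k : ℤ) ≤ r * B.card + C.card := by
    set c : ℤ := ⌈(k : ℚ) / (r : ℚ)⌉ with hc
    have hrq : (0:ℚ) < r := by exact_mod_cast hr
    have hc1 : (k : ℤ) ≤ r * c := by
      have h := Int.le_ceil ((k : ℚ) / (r : ℚ))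
      rw [div_le_iff₀ hrq] at h
      exact_mod_cast (by push_cast; linarith : (k:ℚ) ≤ (r:ℚ) * (c:ℚ))
    by_cases hBc : c ≤ (B.card : ℤ)
    · have h1 : r * c ≤ r * B.card :=
        mul_le_mul_of_nonneg_left hBc (by positivity)
      have h0 : (0:ℤ) ≤ C.card := Int.ofNat_nonneg _
      linarith
    · push_neg at hBc
      have hsub : A.filter (fun i => grp i ∉ B) ⊆ C := by
        intro i hi
        simp only [Finset.mem_filter] at hi
        rcases hcut i hi.1 with h | h
        · exact absurd h hi.2
        · exact h
      have hcount : (A.filter (fun i => grp i ∈ B)).card ≤ (r+1) * B.card := by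
        calc (A.filter (fun i => grp i ∈ B)).card
            ≤ (Finset.univ.filter (fun i => grp i ∈ B)).card := by
              apply Finset.card_le_card
              intro i hi
              simp only [Finset.mem_filter, Finset.mem_univ, true_and] at hi ⊢
              exact hi.2
          _ = (B.biUnion (fun j => Finset.univ.filter (fun i => grp i = j))).card := by
              congr 1; ext i; simp [Finset.mem_biUnion]
          _ = ∑ j ∈ B, (Finset.univ.filter (fun i => grp i = j)).card := by
              apply Finset.card_biUnion
              intro x hx y hy hxy
              simp only [Finset.disjoint_left, Finset.mem_filter, Finset.mem_univ, true_and]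
              intro a ha
              rw [ha]; exact hxy
          _ = (r+1) * B.card := by
              simp [hgrp, mul_comm]
      have hsplit : (A.filter (fun i => grp i ∈ B)).card
          + (A.filter (fun i => grp i ∉ B)).card = A.card :=
        Finset.card_filter_add_card_filter_not (fun i => grp i ∈ B)
      have hCcard : A.card ≤ (r+1) * B.card + C.card := by
        have := Finset.card_le_card hsub
        omega
      have h1 : (A.card : ℤ) ≤ ((r:ℤ)+1) * B.card + C.card := by exact_mod_cast hCcard
      have hAz : (A.card : ℤ) = (n:ℤ) - d + 1 := by
        rw [hA]; push_cast [Nat.cast_sub hdn]; ring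
      linarith
  have h : (k:ℝ) ≤ (r:ℝ) * B.card + C.card := by exact_mod_cast key
  have hMk : (0:ℝ) < M / k := div_pos hM hk0
  calc M = (k:ℝ) * (M/k) := by field_simp
    _ ≤ ((r:ℝ) * B.card + C.card) * (M/k) := mul_le_mul_of_nonneg_right h hMk.le
    _ = (B.card : ℝ) * ((r : ℝ) * (M / k)) + (C.card : ℝ) * (M / k) := by ring
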